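/- Let x, t, y, z be four hooks with pairwise distinct centers on the ground line forming a hook representation of the 4-cycle with edges xt, ty, yz, zx (so x and y are non-adjacent, and t and z are non-adjacent). Then at most one of the centers of t and z lies strictly between the centers of x and y along the ground line. -/
import Mathlib


/-- Vertical stick segment with origin `(p, -p)` and length `α`. -/
def vSeg (p α : ℝ) : Set (ℝ × ℝ) := {z | z.1 = p ∧ -p ≤ z.2 ∧ z.2 ≤ -p + α}

/-- Horizontal stick segment with origin `(q, -q)` and length `β`. -/
def hSeg (q β : ℝ) : Set (ℝ × ℝ) := {z | z.2 = -q ∧ q ≤ z.1 ∧ z.1 ≤ q + β}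

/-- Hook with center `(p,-p)`, vertical arm length `α`, horizontal arm length `β`. -/
def hook (p α β : ℝ) : Set (ℝ × ℝ) := vSeg p α ∪ hSeg p β

/-- `p` lies strictly between `p₁` and `p₂`. -/
def strictlyBetween (p p₁ p₂ : ℝ) : Prop := min p₁ p₂ < p ∧ p < max p₁ p₂

lemma inter_of (p q αp βp αq βq : ℝ) (hpq : p < q)
    (h : (hook p αp βp ∩ hook q αq βq).Nonempty) :
    q ≤ p + βp ∧ q - p ≤ αq := by
  obtain ⟨w, hw1, hw2⟩ := h
  rcases hw1 with h1 | h1 <;> rcases hw2 with h2 | h2 <;>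
    simp only [vSeg, hSeg, Set.mem_setOf_eq] at h1 h2 <;>
    constructor <;> linarith [h1.1, h1.2.1, h1.2.2, h2.1, h2.2.1, h2.2.2]

lemma cross (p q αp βp αq βq : ℝ) (hpq : p < q) (hβ : q ≤ p + βp) (hα : q - p ≤ αq) :
    ((q, -p) : ℝ × ℝ) ∈ hook p αp βp ∩ hook q αq βq := by
  constructor
  · right; refine ⟨rfl, le_of_lt hpq, hβ⟩
  · left; refine ⟨rfl, show -q ≤ -p by linarith, show -p ≤ -q + αq by linarith⟩

theorem four_cycle_hooks_at_most_one_between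
    (px pt py pz αx βx αt βt αy βy αz βz : ℝ)
    (hαx : 0 ≤ αx) (hβx : 0 ≤ βx) (hαt : 0 ≤ αt) (hβt : 0 ≤ βt)
    (hαy : 0 ≤ αy) (hβy : 0 ≤ βy) (hαz : 0 ≤ αz) (hβz : 0 ≤ βz)
    (hdist : px ≠ pt ∧ px ≠ py ∧ px ≠ pz ∧ pt ≠ py ∧ pt ≠ pz ∧ py ≠ pz)
    (hxt : (hook px αx βx ∩ hook pt αt βt).Nonempty)
    (hty : (hook pt αt βt ∩ hook py αy βy).Nonempty)
    (hyz : (hook py αy βy ∩ hook pz αz βz).Nonempty)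
    (hzx : (hook pz αz βz ∩ hook px αx βx).Nonempty)
    (hxy : hook px αx βx ∩ hook py αy βy = ∅)
    (htz : hook pt αt βt ∩ hook pz αz βz = ∅) :
    ¬ (strictlyBetween pt px py ∧ strictlyBetween pz px py) := by
  rintro ⟨⟨ht1, ht2⟩, ⟨hz1, hz2⟩⟩
  obtain ⟨-, -, -, -, htz', -⟩ := hdist
  rcases lt_or_gt_of_ne htz' with htzlt | htzlt
  · -- pt < pz
    rcases min_cases px py with ⟨hmin, hxy'⟩ | ⟨hmin, hxy'⟩ <;>
      rcases max_cases px py with ⟨hmax, hxy''⟩ | ⟨hmax, hxy''⟩ <;>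
      rw [hmin] at ht1 hz1 <;> rw [hmax] at ht2 hz2
    · linarith
    · -- px < py : βt from hty, αz from hzx (swapped)
      have h1 := inter_of pt py αt βt αy βy (by linarith) hty
      have h2 := inter_of px pz αx βx αz βz (by linarith)
        (by rwa [Set.inter_comm] at hzx)
      have := cross pt pz αt βt αz βz htzlt (by linarith [h1.1]) (by linarith [h2.2])
      rw [htz] at this; exact this
    · -- py < px : βt from hxt (swapped), αz from hyz
      have h1 := inter_of pt px αt βt αx βx (by linarith)
        (by rwa [Set.inter_comm] at hxt)
      have h2 := inter_of py pz αy βy αz βz (by linarith) hyz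
      have := cross pt pz αt βt αz βz htzlt (by linarith [h1.1]) (by linarith [h2.2])
      rw [htz] at this; exact this
    · linarith
  · -- pz < pt
    rcases min_cases px py with ⟨hmin, hxy'⟩ | ⟨hmin, hxy'⟩ <;>
      rcases max_cases px py with ⟨hmax, hxy''⟩ | ⟨hmax, hxy''⟩ <;>
      rw [hmin] at ht1 hz1 <;> rw [hmax] at ht2 hz2
    · linarith
    · -- px < py : βz from hyz (swapped), αt from hxt
      have h1 := inter_of pz py αz βz αy βy (by linarith)
        (by rwa [Set.inter_comm] at hyz)
      have h2 := inter_of px pt αx βx αt βt (by linarith) hxt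
      have := cross pz pt αz βz αt βt htzlt (by linarith [h1.1]) (by linarith [h2.2])
      rw [Set.inter_comm, htz] at this; exact this
    · -- py < px : βz from hzx, αt from hty (swapped)
      have h1 := inter_of pz px αz βz αx βx (by linarith) hzx
      have h2 := inter_of py pt αy βy αt βt (by linarith)
        (by rwa [Set.inter_comm] at hty)
      have := cross pz pt αz βz αt βt htzlt (by linarith [h1.1]) (by linarith [h2.2])
      rw [Set.inter_comm, htz] at this; exact this
    · linarith
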